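/- For every nonnegative integer k, every nonnegative real number r, and all positive real numbers ℓ and N, there exists a real number N* ≥ (k+1)N such that the following holds. Let (G,φ) be a (0,ℓ]-bounded weighted graph, let S ⊆ V(G) with |S| ≤ k, let Z ⊆ N_{(G,φ)}^{≤r}[S], let m be a positive integer, let c_Z : Z → {1,…,m}, and let c be an m-coloring of ((G,φ)−Z)^ℓ with weak diameter in ((G,φ)−Z)^ℓ at most N. Then the m-coloring c ∪ c_Z of (G,φ)^ℓ has weak diameter in (G,φ)^ℓ at most N*. -/

import Mathlib

open scoped ENNReal

/-- The length of a walk in an edge-weighted graph: the sum of the weights of its edges. -/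
def walkLen {V : Type} {G : SimpleGraph V} (w : Sym2 V → ℝ) {x y : V} (p : G.Walk x y) : ℝ :=
  (p.edges.map w).sum

/-- The distance between two vertices of an edge-weighted graph: the infimum of the lengths
of paths between them (`⊤` if there is no such path). -/
noncomputable def wDist {V : Type} (G : SimpleGraph V) (w : Sym2 V → ℝ) (x y : V) : ℝ≥0∞ :=
  ⨅ q : {q : G.Walk x y // q.IsPath}, ENNReal.ofReal (walkLen w q.1)

lemma wDist_comm {V : Type} (G : SimpleGraph V) (w : Sym2 V → ℝ) (x y : V) :
    wDist G w x y = wDist G w y x := by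
  have key : ∀ a b : V, wDist G w a b ≤ wDist G w b a := by
    intro a b
    refine le_iInf fun q => ?_
    refine iInf_le_of_le ⟨q.1.reverse, q.2.reverse⟩ ?_
    simp [walkLen, List.sum_reverse]
  exact le_antisymm (key x y) (key y x)

/-- The power graph: two distinct vertices are adjacent iff their weighted distance
is at most `r`. -/
noncomputable def powerGraph {V : Type} (G : SimpleGraph V) (w : Sym2 V → ℝ) (r : ℝ) :
    SimpleGraph V where
  Adj x y := x ≠ y ∧ wDist G w x y ≤ ENNReal.ofReal r
  symm := ⟨by
    rintro x y ⟨hne, hle⟩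
    exact ⟨hne.symm, by rwa [wDist_comm]⟩⟩
  loopless := ⟨fun x h => h.1 rfl⟩

/-- The unit-length (hop) distance in an unweighted graph. -/
noncomputable def hopDist {V : Type} (L : SimpleGraph V) (x y : V) : ℝ≥0∞ :=
  ⨅ q : L.Walk x y, (q.length : ℝ≥0∞)

/-- Same-colour adjacency within a vertex set `A`. -/
def colorGraph {V : Type} (K : SimpleGraph V) (A : Set V) {m : ℕ} (c : V → Fin m) :
    SimpleGraph V where
  Adj x y := K.Adj x y ∧ x ∈ A ∧ y ∈ A ∧ c x = c y
  symm := ⟨by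
    rintro x y ⟨h, hx, hy, hc⟩
    exact ⟨h.symm, hy, hx, hc.symm⟩⟩
  loopless := ⟨fun x h => K.irrefl h.1⟩

/-- The colouring `c` of the subgraph of `K` induced on `A` has weak diameter, measured by the
hop distance of `L`, at most `N`: any two vertices of a monochromatic component of `K ↾ A` are
at hop distance at most `N` in `L`. -/
def HasWeakDiamLE {V : Type} (K : SimpleGraph V) (A : Set V) (L : SimpleGraph V) {m : ℕ}
    (c : V → Fin m) (N : ℝ) : Prop :=
  ∀ x ∈ A, ∀ y ∈ A, (colorGraph K A c).Reachable x y → hopDist L x y ≤ ENNReal.ofReal N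

/-- `nbhd G w r S`: vertices joined to `S` by a path of weighted length at most `r`. -/
def nbhd {V : Type} (G : SimpleGraph V) (w : Sym2 V → ℝ) (r : ℝ) (S : Set V) : Set V :=
  {v | ∃ s ∈ S, ∃ q : G.Walk v s, q.IsPath ∧ walkLen w q ≤ r}

/-- Deleting a set of vertices (keeping them as isolated vertices of the ambient type). -/
def delVerts {V : Type} (G : SimpleGraph V) (Z : Set V) : SimpleGraph V where
  Adj x y := G.Adj x y ∧ x ∉ Z ∧ y ∉ Z
  symm := ⟨by
    rintro x y ⟨h, hx, hy⟩
    exact ⟨h.symm, hy, hx⟩⟩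
  loopless := ⟨fun x h => G.irrefl h.1⟩

/-- A weighted graph: a finite simple graph together with positive edge weights. -/
structure WGraph : Type 1 where
  V : Type
  fin : Finite V
  G : SimpleGraph V
  w : Sym2 V → ℝ
  pos : ∀ e ∈ G.edgeSet, 0 < w e

/-- The extended metric on the vertex set of a weighted graph. -/
noncomputable def WGraph.dist (W : WGraph) : W.V → W.V → ℝ≥0∞ := wDist W.G W.w

/-- All edge weights lie in `(0, ℓ]`. -/
def WGraph.IsBounded (W : WGraph) (ℓ : ℝ) : Prop := ∀ e ∈ W.G.edgeSet, W.w e ≤ ℓ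

/-- `f` is an `n`-dimensional control function for the extended metric `d`. -/
def IsControlOn {X : Type} (d : X → X → ℝ≥0∞) (n : ℕ) (f : ℝ → ℝ) : Prop :=
  ∀ r : ℝ, 0 < r → ∃ U : Fin (n + 1) → Set (Set X),
    (∀ x : X, ∃ i, ∃ s ∈ U i, x ∈ s) ∧
    (∀ i, ∀ s ∈ U i, ∀ t ∈ U i, s ≠ t → ∀ x ∈ s, ∀ y ∈ t, ENNReal.ofReal r < d x y) ∧
    (∀ i, ∀ s ∈ U i, ∀ x ∈ s, ∀ y ∈ s, d x y ≤ ENNReal.ofReal (f r))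

/-- The asymptotic dimension of a class of weighted graphs is at most `n`. -/
def asdimLE (F : Set WGraph) (n : ℕ) : Prop :=
  ∃ f : ℝ → ℝ, (∀ x, 0 < x → 0 < f x) ∧ ∀ W ∈ F, IsControlOn W.dist n f

/-- The Assouad–Nagata dimension of a class of weighted graphs is at most `n`:
some dilation is a common `n`-dimensional control function. -/
def ANdimLE (F : Set WGraph) (n : ℕ) : Prop :=
  ∃ (f : ℝ → ℝ) (c : ℝ), 0 < c ∧ (∀ x, 0 < x → 0 < f x) ∧ (∀ x, 0 < x → f x ≤ c * x) ∧
    ∀ W ∈ F, IsControlOn W.dist n f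

/-- `H` is a minor of `G`: there are pairwise disjoint nonempty connected branch sets in `G`,
one for each vertex of `H`, with branch sets of adjacent vertices joined by an edge. -/
def IsMinorOf {α β : Type} (H : SimpleGraph β) (G : SimpleGraph α) : Prop :=
  ∃ B : β → Set α,
    (∀ h, (B h).Nonempty) ∧
    (∀ h h', h ≠ h' → Disjoint (B h) (B h')) ∧
    (∀ h, (G.induce (B h)).Connected) ∧
    (∀ h h', H.Adj h h' → ∃ a ∈ B h, ∃ b ∈ B h', G.Adj a b)
section Helpers

open SimpleGraph

variable {V : Type}

lemma mapsum_le {α : Type*} {l' l : List α} (w : α → ℝ) (hn : l'.Nodup) (hsub : l' ⊆ l)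
    (h0 : ∀ e ∈ l, 0 ≤ w e) : (l'.map w).sum ≤ (l.map w).sum := by
  obtain ⟨l'', hperm, hsl⟩ := hn.subperm hsub
  calc (l'.map w).sum = (l''.map w).sum := ((hperm.map w).sum_eq).symm
    _ ≤ (l.map w).sum := List.Sublist.sum_le_sum (hsl.map w)
        (by simpa using fun a ha => h0 a ha)

lemma walkLen_nil {G : SimpleGraph V} (w : Sym2 V → ℝ) {x : V} :
    walkLen w (SimpleGraph.Walk.nil : G.Walk x x) = 0 := by simp [walkLen]

lemma walkLen_cons {G : SimpleGraph V} (w : Sym2 V → ℝ) {x y z : V} (h : G.Adj x y)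
    (p : G.Walk y z) : walkLen w (SimpleGraph.Walk.cons h p) = w s(x, y) + walkLen w p := by
  simp [walkLen]

lemma walkLen_nonneg {G : SimpleGraph V} {w : Sym2 V → ℝ}
    (hpos : ∀ e ∈ G.edgeSet, 0 < w e) {x y : V} (q : G.Walk x y) : 0 ≤ walkLen w q := by
  apply List.sum_nonneg
  intro a ha
  simp only [List.mem_map] at ha
  obtain ⟨e, he, rfl⟩ := ha
  exact (hpos e (q.edges_subset_edgeSet he)).le

lemma wDist_le_walkLen {G : SimpleGraph V} (w : Sym2 V → ℝ) {x y : V} (q : G.Walk x y)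
    (hq : q.IsPath) : wDist G w x y ≤ ENNReal.ofReal (walkLen w q) :=
  iInf_le _ (⟨q, hq⟩ : {q : G.Walk x y // q.IsPath})

lemma wDist_self {G : SimpleGraph V} (w : Sym2 V → ℝ) (x : V) : wDist G w x x = 0 := by
  refine le_antisymm ?_ zero_le
  simpa [walkLen_nil] using wDist_le_walkLen w (SimpleGraph.Walk.nil : G.Walk x x)
      SimpleGraph.Walk.IsPath.nil

lemma wDist_le_walk {G : SimpleGraph V} {w : Sym2 V → ℝ}
    (hpos : ∀ e ∈ G.edgeSet, 0 < w e) {x y : V} (q : G.Walk x y) :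
    wDist G w x y ≤ ENNReal.ofReal (walkLen w q) := by
  classical
  refine le_trans (wDist_le_walkLen w q.bypass q.bypass_isPath) (ENNReal.ofReal_le_ofReal ?_)
  exact mapsum_le w q.bypass_isPath.edges_nodup q.edges_bypass_subset
    (fun e he => (hpos e (q.edges_subset_edgeSet he)).le)

lemma wDist_triangle {G : SimpleGraph V} {w : Sym2 V → ℝ}
    (hpos : ∀ e ∈ G.edgeSet, 0 < w e) (x y z : V) :
    wDist G w x z ≤ wDist G w x y + wDist G w y z := by
  classical
  by_cases h1 : Nonempty {q : G.Walk x y // q.IsPath}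
  · by_cases h2 : Nonempty {q : G.Walk y z // q.IsPath}
    · rw [show wDist G w x y = ⨅ q : {q : G.Walk x y // q.IsPath},
          ENNReal.ofReal (walkLen w q.1) from rfl, ENNReal.iInf_add]
      refine le_iInf fun p => ?_
      rw [show wDist G w y z = ⨅ q : {q : G.Walk y z // q.IsPath},
          ENNReal.ofReal (walkLen w q.1) from rfl, ENNReal.add_iInf]
      refine le_iInf fun q => ?_
      refine le_trans (wDist_le_walk hpos (p.1.append q.1)) ?_
      have : walkLen w (p.1.append q.1) = walkLen w p.1 + walkLen w q.1 := by
        simp [walkLen, SimpleGraph.Walk.edges_append]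
      rw [this]
      exact ENNReal.ofReal_add_le
    · haveI := not_nonempty_iff.mp h2
      have : wDist G w y z = ⊤ := by rw [wDist, iInf_of_empty]
      rw [this, add_top]; exact le_top
  · haveI := not_nonempty_iff.mp h1
    have : wDist G w x y = ⊤ := by rw [wDist, iInf_of_empty]
    rw [this, top_add]; exact le_top

lemma wDist_anti {G G' : SimpleGraph V} (hG : G ≤ G') (w : Sym2 V → ℝ) (x y : V) :
    wDist G' w x y ≤ wDist G w x y := by
  refine le_iInf fun q => ?_
  have hedges : ∀ e ∈ q.1.edges, e ∈ G'.edgeSet :=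
    fun e he => SimpleGraph.edgeSet_mono hG (q.1.edges_subset_edgeSet he)
  refine iInf_le_of_le ⟨q.1.transfer G' hedges, ?_⟩ ?_
  · rw [SimpleGraph.Walk.isPath_def, SimpleGraph.Walk.support_transfer]
    exact q.2.support_nodup
  · simp [walkLen, SimpleGraph.Walk.edges_transfer]

lemma hopDist_self (L : SimpleGraph V) (x : V) : hopDist L x x = 0 := by
  refine le_antisymm ?_ zero_le
  simpa [hopDist] using iInf_le (fun q : L.Walk x x => (q.length : ℝ≥0∞)) SimpleGraph.Walk.nil

lemma hopDist_le_one_of_adj {L : SimpleGraph V} {x y : V} (h : L.Adj x y) :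
    hopDist L x y ≤ 1 := by
  simpa [hopDist] using iInf_le (fun q : L.Walk x y => (q.length : ℝ≥0∞)) (h.toWalk)

lemma hopDist_comm (L : SimpleGraph V) (x y : V) : hopDist L x y = hopDist L y x := by
  have key : ∀ a b : V, hopDist L a b ≤ hopDist L b a := by
    intro a b
    refine le_iInf fun q => ?_
    simpa [hopDist] using iInf_le (fun q : L.Walk a b => (q.length : ℝ≥0∞)) q.reverse
  exact le_antisymm (key x y) (key y x)

lemma hopDist_triangle (L : SimpleGraph V) (x y z : V) :
    hopDist L x z ≤ hopDist L x y + hopDist L y z := by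
  by_cases h1 : Nonempty (L.Walk x y)
  · by_cases h2 : Nonempty (L.Walk y z)
    · rw [show hopDist L x y = ⨅ q : L.Walk x y, (q.length : ℝ≥0∞) from rfl,
          ENNReal.iInf_add]
      refine le_iInf fun p => ?_
      rw [show hopDist L y z = ⨅ q : L.Walk y z, (q.length : ℝ≥0∞) from rfl,
          ENNReal.add_iInf]
      refine le_iInf fun q => ?_
      refine le_trans (iInf_le (fun q : L.Walk x z => (q.length : ℝ≥0∞)) (p.append q)) ?_
      simp [SimpleGraph.Walk.length_append]
    · haveI := not_nonempty_iff.mp h2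
      have : hopDist L y z = ⊤ := by rw [hopDist, iInf_of_empty]
      rw [this, add_top]; exact le_top
  · haveI := not_nonempty_iff.mp h1
    have : hopDist L x y = ⊤ := by rw [hopDist, iInf_of_empty]
    rw [this, top_add]; exact le_top

lemma hopDist_anti {L L' : SimpleGraph V} (hL : L ≤ L') (x y : V) :
    hopDist L' x y ≤ hopDist L x y := by
  refine le_iInf fun q => ?_
  refine iInf_le_of_le (q.mapLe hL) ?_
  simp [SimpleGraph.Walk.mapLe]

end Helpers
section Helpers2

open SimpleGraph

variable {V : Type}

lemma exists_path_of_wDist_le [Finite V] {G : SimpleGraph V} {w : Sym2 V → ℝ} {x y : V}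
    {D : ℝ} (hD : 0 ≤ D) (h : wDist G w x y ≤ ENNReal.ofReal D) :
    ∃ q : G.Walk x y, q.IsPath ∧ walkLen w q ≤ D := by
  classical
  haveI : Fintype V := Fintype.ofFinite V
  haveI : DecidableRel G.Adj := Classical.decRel _
  by_cases hne : Nonempty {q : G.Walk x y // q.IsPath}
  · haveI : Fintype {q : G.Walk x y // q.IsPath} := SimpleGraph.Path.instFintype G
    obtain ⟨q, hqmin⟩ := Finite.exists_min
      (fun q : {q : G.Walk x y // q.IsPath} => ENNReal.ofReal (walkLen w q.1))
    have hle : ENNReal.ofReal (walkLen w q.1) ≤ wDist G w x y := le_iInf hqmin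
    refine ⟨q.1, q.2, ?_⟩
    exact (ENNReal.ofReal_le_ofReal_iff hD).mp (hle.trans h)
  · exfalso
    haveI := not_nonempty_iff.mp hne
    have htop : wDist G w x y = ⊤ := by rw [wDist, iInf_of_empty]
    rw [htop] at h
    exact absurd (le_antisymm le_top h) (by simp [ENNReal.ofReal_lt_top.ne])
    
lemma wDist_le_of_adj {G : SimpleGraph V} (w : Sym2 V → ℝ) {x y : V} (h : G.Adj x y) :
    wDist G w x y ≤ ENNReal.ofReal (w s(x, y)) := by
  have := wDist_le_walkLen w (SimpleGraph.Path.singleton h).1 (SimpleGraph.Path.singleton h).2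
  simpa [walkLen, SimpleGraph.Path.singleton] using this

lemma hop_le_one {G : SimpleGraph V} {w : Sym2 V → ℝ} {ℓ : ℝ} {x y : V}
    (h : wDist G w x y ≤ ENNReal.ofReal ℓ) : hopDist (powerGraph G w ℓ) x y ≤ 1 := by
  by_cases hxy : x = y
  · subst hxy; rw [hopDist_self]; exact zero_le_one
  · exact hopDist_le_one_of_adj (show x ≠ y ∧ _ from ⟨hxy, h⟩)

lemma seg {G : SimpleGraph V} {w : Sym2 V → ℝ} {ℓ : ℝ} (hℓ : 0 < ℓ)
    (hpos : ∀ e ∈ G.edgeSet, 0 < w e) (hb : ∀ e ∈ G.edgeSet, w e ≤ ℓ)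
    {v y : V} (q : G.Walk v y) :
    ∀ (hq : q.IsPath) (x : V) (a : ℝ) (n : ℕ), 0 ≤ a → a ≤ ℓ →
      wDist G w x v ≤ ENNReal.ofReal a →
      a + walkLen w q ≤ (n + 1) * ℓ →
      hopDist (powerGraph G w ℓ) x y ≤ ((2 * n + 1 : ℕ) : ℝ≥0∞) := by
  induction q with
  | nil =>
    intro _ x a n ha0 haℓ hxa _
    refine le_trans (hop_le_one (le_trans hxa (ENNReal.ofReal_le_ofReal haℓ))) ?_
    exact_mod_cast Nat.one_le_iff_ne_zero.mpr (by omega)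
  | @cons u v₁ y h p ih =>
    intro hq x a n ha0 haℓ hxa hbudget
    have he : s(u, v₁) ∈ G.edgeSet := h
    have hwe0 : 0 < w s(u, v₁) := hpos _ he
    have hweℓ : w s(u, v₁) ≤ ℓ := hb _ he
    have hplen : 0 ≤ walkLen w p := walkLen_nonneg hpos p
    rw [walkLen_cons] at hbudget
    by_cases hcase : a + w s(u, v₁) ≤ ℓ
    · refine ih hq.of_cons x (a + w s(u, v₁)) n (by linarith) hcase ?_ (by linarith)
      calc wDist G w x v₁ ≤ wDist G w x u + wDist G w u v₁ := wDist_triangle hpos x u v₁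
        _ ≤ ENNReal.ofReal a + ENNReal.ofReal (w s(u, v₁)) :=
            add_le_add hxa (wDist_le_of_adj w h)
        _ = ENNReal.ofReal (a + w s(u, v₁)) := (ENNReal.ofReal_add ha0 hwe0.le).symm
    · obtain ⟨m, rfl⟩ : ∃ m, n = m + 1 := by
        cases n with
        | zero => exfalso; push_cast at hbudget; nlinarith
        | succ m => exact ⟨m, rfl⟩
      have h1 : hopDist (powerGraph G w ℓ) x u ≤ 1 :=
        hop_le_one (hxa.trans (ENNReal.ofReal_le_ofReal haℓ))
      have h2 : hopDist (powerGraph G w ℓ) u v₁ ≤ 1 :=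
        hop_le_one ((wDist_le_of_adj w h).trans (ENNReal.ofReal_le_ofReal hweℓ))
      have h3 : hopDist (powerGraph G w ℓ) v₁ y ≤ ((2 * m + 1 : ℕ) : ℝ≥0∞) := by
        refine ih hq.of_cons v₁ 0 m le_rfl hℓ.le ?_ ?_
        · rw [wDist_self]; exact zero_le
        · push_cast at hbudget ⊢; nlinarith
      calc hopDist (powerGraph G w ℓ) x y
          ≤ hopDist (powerGraph G w ℓ) x u + hopDist (powerGraph G w ℓ) u y :=
            hopDist_triangle _ x u y
        _ ≤ hopDist (powerGraph G w ℓ) x u +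
            (hopDist (powerGraph G w ℓ) u v₁ + hopDist (powerGraph G w ℓ) v₁ y) :=
            add_le_add le_rfl (hopDist_triangle _ u v₁ y)
        _ ≤ 1 + (1 + ((2 * m + 1 : ℕ) : ℝ≥0∞)) := by
            exact add_le_add h1 (add_le_add h2 h3)
        _ = ((2 * (m + 1) + 1 : ℕ) : ℝ≥0∞) := by push_cast; ring

lemma hop_le_of_wDist [Finite V] {G : SimpleGraph V} {w : Sym2 V → ℝ} {ℓ : ℝ} (hℓ : 0 < ℓ)
    (hpos : ∀ e ∈ G.edgeSet, 0 < w e) (hb : ∀ e ∈ G.edgeSet, w e ≤ ℓ)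
    {x y : V} {D : ℝ} {n : ℕ} (hD : 0 ≤ D) (hDn : D ≤ (n + 1) * ℓ)
    (h : wDist G w x y ≤ ENNReal.ofReal D) :
    hopDist (powerGraph G w ℓ) x y ≤ ((2 * n + 1 : ℕ) : ℝ≥0∞) := by
  obtain ⟨q, hq, hlen⟩ := exists_path_of_wDist_le hD h
  refine seg hℓ hpos hb q hq x 0 n le_rfl hℓ.le ?_ (by linarith)
  rw [wDist_self]; exact zero_le

end Helpers2
section MainAux

open SimpleGraph

variable {V : Type} [Finite V] {G : SimpleGraph V} {w : Sym2 V → ℝ} {ℓ r N : ℝ}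
  {S Z : Set V} {m : ℕ} {c c' : V → Fin m}

lemma notZ_of_far (hℓ : 0 < ℓ) (hZ : Z ⊆ nbhd G w r S) {v : V}
    (hv : ¬ ∃ s ∈ S, wDist G w v s ≤ ENNReal.ofReal (ℓ + r)) : v ∉ Z := by
  intro hvZ
  obtain ⟨s, hs, qz, hqz, hlen⟩ := hZ hvZ
  exact hv ⟨s, hs, (wDist_le_walkLen w qz hqz).trans (ENNReal.ofReal_le_ofReal (by linarith))⟩

lemma delVerts_le : delVerts G Z ≤ G := fun _ _ h => (h : _ ∧ _).1

lemma powerGraph_delVerts_le (w : Sym2 V → ℝ) (ℓ : ℝ) :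
    powerGraph (delVerts G Z) w ℓ ≤ powerGraph G w ℓ := by
  intro a b hab
  exact (show a ≠ b ∧ _ from ⟨(hab : _ ∧ _).1, le_trans (wDist_anti delVerts_le w a b) (hab : _ ∧ _).2⟩)

lemma edge_aux (hℓ : 0 < ℓ) (hr : 0 ≤ r)
    (hpos : ∀ e ∈ G.edgeSet, 0 < w e) (hZ : Z ⊆ nbhd G w r S)
    (hcc' : ∀ v ∈ Zᶜ, c' v = c v) {u v : V}
    (hu : ¬ ∃ s ∈ S, wDist G w u s ≤ ENNReal.ofReal (ℓ + r))
    (hv : ¬ ∃ s ∈ S, wDist G w v s ≤ ENNReal.ofReal (ℓ + r))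
    (huv : (colorGraph (powerGraph G w ℓ) Set.univ c').Adj u v) :
    (colorGraph (powerGraph (delVerts G Z) w ℓ) Zᶜ c).Adj u v := by
  classical
  obtain ⟨hpg, -, -, hcuv⟩ := (huv : _ ∧ _ ∧ _ ∧ _)
  obtain ⟨hne, hd⟩ := (hpg : _ ∧ _)
  have huZ : u ∉ Z := notZ_of_far hℓ hZ hu
  have hvZ : v ∉ Z := notZ_of_far hℓ hZ hv
  obtain ⟨q, hq, hlen⟩ := exists_path_of_wDist_le hℓ.le hd
  have hsupp : ∀ z ∈ q.support, z ∉ Z := by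
    intro z hzsup hzZ
    have hq1 : (q.takeUntil z hzsup).IsPath := hq.takeUntil hzsup
    have hlen1 : walkLen w (q.takeUntil z hzsup) ≤ walkLen w q :=
      mapsum_le w hq1.edges_nodup (q.edges_takeUntil_subset hzsup)
        (fun e he => (hpos e (q.edges_subset_edgeSet he)).le)
    have hwz : wDist G w u z ≤ ENNReal.ofReal ℓ :=
      (wDist_le_walkLen w _ hq1).trans (ENNReal.ofReal_le_ofReal (hlen1.trans hlen))
    obtain ⟨s, hs, qz, hqz, hqzlen⟩ := hZ hzZ
    refine hu ⟨s, hs, ?_⟩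
    calc wDist G w u s ≤ wDist G w u z + wDist G w z s := wDist_triangle hpos u z s
      _ ≤ ENNReal.ofReal ℓ + ENNReal.ofReal r :=
          add_le_add hwz ((wDist_le_walkLen w qz hqz).trans (ENNReal.ofReal_le_ofReal hqzlen))
      _ = ENNReal.ofReal (ℓ + r) := (ENNReal.ofReal_add hℓ.le hr).symm
  have hedges : ∀ e ∈ q.edges, e ∈ (delVerts G Z).edgeSet := by
    intro e he
    induction e with
    | _ a b =>
      exact (SimpleGraph.mem_edgeSet (delVerts G Z)).mpr
        ⟨(SimpleGraph.mem_edgeSet G).mp (q.edges_subset_edgeSet he),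
         hsupp a (q.fst_mem_support_of_mem_edges he),
         hsupp b (q.snd_mem_support_of_mem_edges he)⟩
  have hdel : wDist (delVerts G Z) w u v ≤ ENNReal.ofReal ℓ := by
    have hpath : (q.transfer (delVerts G Z) hedges).IsPath := by
      rw [SimpleGraph.Walk.isPath_def, SimpleGraph.Walk.support_transfer]
      exact hq.support_nodup
    have heq : walkLen w (q.transfer (delVerts G Z) hedges) = walkLen w q := by
      simp [walkLen, SimpleGraph.Walk.edges_transfer]
    have hle := wDist_le_walkLen w (q.transfer (delVerts G Z) hedges) hpath
    rw [heq] at hle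
    exact hle.trans (ENNReal.ofReal_le_ofReal hlen)
  refine (show (_ ∧ _) ∧ _ ∧ _ ∧ _ from ⟨(show u ≠ v ∧ _ from ⟨hne, hdel⟩), huZ, hvZ, ?_⟩)
  rw [← hcc' u huZ, ← hcc' v hvZ]
  exact hcuv

lemma front_aux (hℓ : 0 < ℓ) (hr : 0 ≤ r)
    (hpos : ∀ e ∈ G.edgeSet, 0 < w e) (hZ : Z ⊆ nbhd G w r S)
    (hcc' : ∀ v ∈ Zᶜ, c' v = c v) :
    ∀ {x y : V} (q : (colorGraph (powerGraph G w ℓ) Set.univ c').Walk x y),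
      (¬ ∃ s ∈ S, wDist G w x s ≤ ENNReal.ofReal (ℓ + r)) →
      ((colorGraph (powerGraph (delVerts G Z) w ℓ) Zᶜ c).Reachable x y ∧
        ¬ ∃ s ∈ S, wDist G w y s ≤ ENNReal.ofReal (ℓ + r)) ∨
      (∃ w' u', (¬ ∃ s ∈ S, wDist G w w' s ≤ ENNReal.ofReal (ℓ + r)) ∧
        (colorGraph (powerGraph (delVerts G Z) w ℓ) Zᶜ c).Reachable x w' ∧
        (colorGraph (powerGraph G w ℓ) Set.univ c').Adj w' u' ∧
        (∃ s ∈ S, wDist G w u' s ≤ ENNReal.ofReal (ℓ + r)) ∧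
        ∃ q' : (colorGraph (powerGraph G w ℓ) Set.univ c').Walk u' y,
          q'.length < q.length ∧ ∀ v ∈ q'.support, v ∈ q.support) := by
  intro x y q
  induction q with
  | nil => exact fun hx => Or.inl ⟨SimpleGraph.Reachable.refl _, hx⟩
  | @cons x v y h p ih =>
    intro hx
    by_cases hv : ∃ s ∈ S, wDist G w v s ≤ ENNReal.ofReal (ℓ + r)
    · refine Or.inr ⟨x, v, hx, SimpleGraph.Reachable.refl x, h, hv, p, ?_, ?_⟩
      · simp [SimpleGraph.Walk.length_cons]
      · intro z hz
        rw [SimpleGraph.Walk.support_cons]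
        exact List.mem_cons_of_mem _ hz
    · have hadj : (colorGraph (powerGraph (delVerts G Z) w ℓ) Zᶜ c).Adj x v :=
        edge_aux hℓ hr hpos hZ hcc' hx hv h
      rcases ih hv with ⟨hre, hy⟩ | ⟨w', u', hw', hre, hadj', hu', q', hlt, hsub⟩
      · exact Or.inl ⟨hadj.reachable.trans hre, hy⟩
      · refine Or.inr ⟨w', u', hw', hadj.reachable.trans hre, hadj', hu', q', ?_, ?_⟩
        · rw [SimpleGraph.Walk.length_cons]; omega
        · intro z hz
          rw [SimpleGraph.Walk.support_cons]
          exact List.mem_cons_of_mem _ (hsub z hz)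

lemma inner_aux (hℓ : 0 < ℓ) (hr : 0 ≤ r)
    (hpos : ∀ e ∈ G.edgeSet, 0 < w e) (hb : ∀ e ∈ G.edgeSet, w e ≤ ℓ)
    {n₀ : ℕ} (hn₀ : ℓ + r ≤ (n₀ + 1) * ℓ)
    (s₀ : V) (B' : ℝ≥0∞) (T : Set V)
    (oracle : ∀ (x y : V) (q : (colorGraph (powerGraph G w ℓ) Set.univ c').Walk x y),
      (∀ v ∈ q.support, ∀ s ∈ S, wDist G w v s ≤ ENNReal.ofReal (ℓ + r) → s ∈ T \ {s₀}) →
      hopDist (powerGraph G w ℓ) x y ≤ B') :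
    ∀ (L : ℕ) (v y : V) (q : (colorGraph (powerGraph G w ℓ) Set.univ c').Walk v y),
      q.length ≤ L →
      (∀ v' ∈ q.support, ∀ s ∈ S, wDist G w v' s ≤ ENNReal.ofReal (ℓ + r) → s ∈ T) →
      wDist G w v s₀ ≤ ENNReal.ofReal (ℓ + r) →
      hopDist (powerGraph G w ℓ) s₀ y ≤ ((2 * n₀ + 1 : ℕ) : ℝ≥0∞) + 1 + B' := by
  classical
  intro L
  induction L using Nat.strong_induction_on with
  | _ L ihL =>
    intro v y q hql hwit hnear
    cases q with
    | nil =>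
      have hvs : hopDist (powerGraph G w ℓ) v s₀ ≤ ((2 * n₀ + 1 : ℕ) : ℝ≥0∞) :=
        hop_le_of_wDist hℓ hpos hb (by linarith) hn₀ hnear
      rw [hopDist_comm] at hvs
      exact hvs.trans (le_trans le_self_add le_self_add)
    | @cons v v₂ y h p =>
      by_cases hex : ∃ v' ∈ p.support, wDist G w v' s₀ ≤ ENNReal.ofReal (ℓ + r)
      · obtain ⟨v', hv'sup, hv'near⟩ := hex
        have hlendrop : (p.dropUntil v' hv'sup).length ≤ p.length := by
          have hspec := SimpleGraph.Walk.take_spec p hv'sup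
          have := congr_arg SimpleGraph.Walk.length hspec
          rw [SimpleGraph.Walk.length_append] at this
          omega
        have hLlt : p.length < L := by
          rw [SimpleGraph.Walk.length_cons] at hql; omega
        refine ihL p.length hLlt v' y (p.dropUntil v' hv'sup) hlendrop ?_ hv'near
        intro z hz s hs hzs
        refine hwit z ?_ s hs hzs
        rw [SimpleGraph.Walk.support_cons]
        exact List.mem_cons_of_mem _ (SimpleGraph.Walk.support_dropUntil_subset p hv'sup hz)
      · have hwit2 : ∀ v' ∈ p.support, ∀ s ∈ S,
            wDist G w v' s ≤ ENNReal.ofReal (ℓ + r) → s ∈ T \ {s₀} := by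
          intro v' hv' s hs hnear'
          have hv'' : v' ∈ (SimpleGraph.Walk.cons h p).support := by
            rw [SimpleGraph.Walk.support_cons]
            exact List.mem_cons_of_mem _ hv'
          refine ⟨hwit v' hv'' s hs hnear', ?_⟩
          intro heq
          rw [Set.mem_singleton_iff] at heq
          exact hex ⟨v', hv', heq ▸ hnear'⟩
        have hb2 : hopDist (powerGraph G w ℓ) v₂ y ≤ B' := oracle v₂ y p hwit2
        have h1 : hopDist (powerGraph G w ℓ) s₀ v ≤ ((2 * n₀ + 1 : ℕ) : ℝ≥0∞) := by
          rw [hopDist_comm]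
          exact hop_le_of_wDist hℓ hpos hb (by linarith) hn₀ hnear
        have h2 : hopDist (powerGraph G w ℓ) v v₂ ≤ 1 := hopDist_le_one_of_adj (h : _ ∧ _).1
        calc hopDist (powerGraph G w ℓ) s₀ y
            ≤ hopDist (powerGraph G w ℓ) s₀ v + hopDist (powerGraph G w ℓ) v y :=
              hopDist_triangle _ _ _ _
          _ ≤ hopDist (powerGraph G w ℓ) s₀ v +
              (hopDist (powerGraph G w ℓ) v v₂ + hopDist (powerGraph G w ℓ) v₂ y) :=
              add_le_add le_rfl (hopDist_triangle _ _ _ _)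
          _ ≤ ((2 * n₀ + 1 : ℕ) : ℝ≥0∞) + (1 + B') := add_le_add h1 (add_le_add h2 hb2)
          _ = ((2 * n₀ + 1 : ℕ) : ℝ≥0∞) + 1 + B' := by ring

end MainAux
section MainAux2

open SimpleGraph

variable {V : Type} [Finite V] {G : SimpleGraph V} {w : Sym2 V → ℝ} {ℓ r N : ℝ}
  {S Z : Set V} {m : ℕ} {c c' : V → Fin m}

lemma main_aux (hℓ : 0 < ℓ) (hr : 0 ≤ r)
    (hpos : ∀ e ∈ G.edgeSet, 0 < w e) (hbnd : ∀ e ∈ G.edgeSet, w e ≤ ℓ)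
    (hZ : Z ⊆ nbhd G w r S)
    (hcc' : ∀ v ∈ Zᶜ, c' v = c v)
    (hcN : HasWeakDiamLE (powerGraph (delVerts G Z) w ℓ) Zᶜ
      (powerGraph (delVerts G Z) w ℓ) c N)
    {n₀ : ℕ} (hn₀ : ℓ + r ≤ (n₀ + 1) * ℓ) :
    ∀ (n : ℕ) (T : Set V), T ⊆ S → T.ncard ≤ n →
      ∀ (x y : V) (q : (colorGraph (powerGraph G w ℓ) Set.univ c').Walk x y),
      (∀ v ∈ q.support, ∀ s ∈ S, wDist G w v s ≤ ENNReal.ofReal (ℓ + r) → s ∈ T) →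
      hopDist (powerGraph G w ℓ) x y ≤
        ((n + 1 : ℕ) : ℝ≥0∞) * (ENNReal.ofReal N + ((2 * (2 * n₀ + 1) + 4 : ℕ) : ℝ≥0∞)) := by
  have hleft : ∀ x y : V, (¬ ∃ s ∈ S, wDist G w x s ≤ ENNReal.ofReal (ℓ + r)) →
      (¬ ∃ s ∈ S, wDist G w y s ≤ ENNReal.ofReal (ℓ + r)) →
      (colorGraph (powerGraph (delVerts G Z) w ℓ) Zᶜ c).Reachable x y →
      hopDist (powerGraph G w ℓ) x y ≤ ENNReal.ofReal N := by
    intro x y hx hy hre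
    exact (hopDist_anti (powerGraph_delVerts_le w ℓ) x y).trans
      (hcN x (notZ_of_far hℓ hZ hx) y (notZ_of_far hℓ hZ hy) hre)
  set A : ℝ≥0∞ := ((2 * n₀ + 1 : ℕ) : ℝ≥0∞) with hA
  set Bs : ℝ≥0∞ := ENNReal.ofReal N + ((2 * (2 * n₀ + 1) + 4 : ℕ) : ℝ≥0∞) with hBs
  have harith : A + A + 1 + 1 + ENNReal.ofReal N ≤ Bs := by
    have h1 : A + A + 1 + 1 ≤ ((2 * (2 * n₀ + 1) + 4 : ℕ) : ℝ≥0∞) := by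
      rw [show ((2 * (2 * n₀ + 1) + 4 : ℕ) : ℝ≥0∞) = A + A + 1 + 1 + 2 by
        rw [hA]; push_cast; ring]
      exact le_self_add
    calc A + A + 1 + 1 + ENNReal.ofReal N
        ≤ ((2 * (2 * n₀ + 1) + 4 : ℕ) : ℝ≥0∞) + ENNReal.ofReal N := add_le_add h1 le_rfl
      _ = Bs := by rw [hBs, add_comm]
  intro n
  induction n with
  | zero =>
    intro T hTS hTcard x y q hwit
    have hT : T = ∅ := (Set.ncard_eq_zero (Set.toFinite T)).mp (Nat.le_zero.mp hTcard)
    subst hT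
    have hnone : ∀ v ∈ q.support, ¬ ∃ s ∈ S, wDist G w v s ≤ ENNReal.ofReal (ℓ + r) := by
      rintro v hv ⟨s, hs, hws⟩
      exact absurd (hwit v hv s hs hws) (Set.notMem_empty s)
    have hx := hnone x q.start_mem_support
    rcases front_aux hℓ hr hpos hZ hcc' q hx with ⟨hre, hy⟩ |
      ⟨w', u', hw', hre, hadj, hu', q', hlt, hsub⟩
    · refine (hleft x y hx hy hre).trans ?_
      calc ENNReal.ofReal N ≤ Bs := le_self_add
        _ = ((0 + 1 : ℕ) : ℝ≥0∞) * Bs := by norm_num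
    · exact absurd hu' (hnone u' (hsub u' q'.start_mem_support))
  | succ n ihn =>
    intro T hTS hTcard x y q hwit
    have hstep : Bs + ((n + 1 : ℕ) : ℝ≥0∞) * Bs = ((n + 1 + 1 : ℕ) : ℝ≥0∞) * Bs := by
      push_cast; ring
    by_cases hx : ∃ s ∈ S, wDist G w x s ≤ ENNReal.ofReal (ℓ + r)
    · obtain ⟨s₀, hs₀S, hxnear⟩ := hx
      have hs₀T : s₀ ∈ T := hwit x q.start_mem_support s₀ hs₀S hxnear
      have hcard2 : (T \ {s₀}).ncard ≤ n := by
        have h1 := Set.ncard_diff_singleton_add_one hs₀T (Set.toFinite T)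
        omega
      have oracle := fun x' y' q' hw' =>
        ihn (T \ {s₀}) (Set.diff_subset.trans hTS) hcard2 x' y' q' hw'
      have hinner := inner_aux hℓ hr hpos hbnd hn₀ s₀ _ T oracle q.length x y q
        le_rfl hwit hxnear
      have h1 : hopDist (powerGraph G w ℓ) x s₀ ≤ A :=
        hop_le_of_wDist hℓ hpos hbnd (by linarith) hn₀ hxnear
      calc hopDist (powerGraph G w ℓ) x y
          ≤ hopDist (powerGraph G w ℓ) x s₀ + hopDist (powerGraph G w ℓ) s₀ y :=
            hopDist_triangle _ _ _ _
        _ ≤ A + (A + 1 + ((n + 1 : ℕ) : ℝ≥0∞) * Bs) := add_le_add h1 hinner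
        _ = (A + A + 1) + ((n + 1 : ℕ) : ℝ≥0∞) * Bs := by ring
        _ ≤ Bs + ((n + 1 : ℕ) : ℝ≥0∞) * Bs := by
            refine add_le_add ?_ le_rfl
            exact le_trans (le_trans le_self_add le_self_add) harith
        _ = ((n + 1 + 1 : ℕ) : ℝ≥0∞) * Bs := hstep
    · rcases front_aux hℓ hr hpos hZ hcc' q hx with ⟨hre, hy⟩ |
        ⟨w', u', hw', hre, hadj, hu', q', hlt, hsub⟩
      · refine (hleft x y hx hy hre).trans ?_
        calc ENNReal.ofReal N ≤ Bs := le_self_add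
          _ = 1 * Bs := (one_mul _).symm
          _ ≤ ((n + 1 + 1 : ℕ) : ℝ≥0∞) * Bs :=
              mul_le_mul_left (by exact_mod_cast Nat.one_le_iff_ne_zero.mpr (by omega)) _
      · obtain ⟨s₀, hs₀S, hu'near⟩ := hu'
        have hs₀T : s₀ ∈ T := hwit u' (hsub u' q'.start_mem_support) s₀ hs₀S hu'near
        have hcard2 : (T \ {s₀}).ncard ≤ n := by
          have h1 := Set.ncard_diff_singleton_add_one hs₀T (Set.toFinite T)
          omega
        have oracle := fun x' y' q' hw' =>
          ihn (T \ {s₀}) (Set.diff_subset.trans hTS) hcard2 x' y' q' hw'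
        have hinner := inner_aux hℓ hr hpos hbnd hn₀ s₀ _ T oracle q'.length u' y q'
          le_rfl (fun z hz => hwit z (hsub z hz)) hu'near
        have hxw : hopDist (powerGraph G w ℓ) x w' ≤ ENNReal.ofReal N := hleft x w' hx hw' hre
        have hwu : hopDist (powerGraph G w ℓ) w' u' ≤ 1 := hopDist_le_one_of_adj (hadj : _ ∧ _).1
        have hus : hopDist (powerGraph G w ℓ) u' s₀ ≤ A :=
          hop_le_of_wDist hℓ hpos hbnd (by linarith) hn₀ hu'near
        calc hopDist (powerGraph G w ℓ) x y
            ≤ hopDist (powerGraph G w ℓ) x w' + hopDist (powerGraph G w ℓ) w' y :=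
              hopDist_triangle _ _ _ _
          _ ≤ hopDist (powerGraph G w ℓ) x w' + (hopDist (powerGraph G w ℓ) w' u' +
              hopDist (powerGraph G w ℓ) u' y) := add_le_add le_rfl (hopDist_triangle _ _ _ _)
          _ ≤ hopDist (powerGraph G w ℓ) x w' + (hopDist (powerGraph G w ℓ) w' u' +
              (hopDist (powerGraph G w ℓ) u' s₀ + hopDist (powerGraph G w ℓ) s₀ y)) := by
              refine add_le_add le_rfl (add_le_add le_rfl (hopDist_triangle _ _ _ _))
          _ ≤ ENNReal.ofReal N + (1 + (A + (A + 1 + ((n + 1 : ℕ) : ℝ≥0∞) * Bs))) :=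
              add_le_add hxw (add_le_add hwu (add_le_add hus hinner))
          _ = (A + A + 1 + 1 + ENNReal.ofReal N) + ((n + 1 : ℕ) : ℝ≥0∞) * Bs := by ring
          _ ≤ Bs + ((n + 1 : ℕ) : ℝ≥0∞) * Bs := add_le_add harith le_rfl
          _ = ((n + 1 + 1 : ℕ) : ℝ≥0∞) * Bs := hstep

end MainAux2
/-- Theorem (Lemma `deleting_centered_set`): colourings of `(G,φ)^ℓ` obtained by combining a
colouring of `((G,φ)−Z)^ℓ` of weak diameter in `((G,φ)−Z)^ℓ` at most `N` with an arbitrary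
colouring of `Z`, where `Z ⊆ N_{(G,φ)}^{≤r}[S]` with `|S| ≤ k`, have weak diameter in
`(G,φ)^ℓ` at most `N*`. -/
theorem deleting_centered_set (k : ℕ) (r : ℝ) (hr : 0 ≤ r) (ℓ N : ℝ)
    (hℓ : 0 < ℓ) (hN : 0 < N) :
    ∃ Nstar : ℝ, (k + 1 : ℝ) * N ≤ Nstar ∧
      ∀ W : WGraph, W.IsBounded ℓ →
        ∀ S : Set W.V, S.ncard ≤ k →
          ∀ Z : Set W.V, Z ⊆ nbhd W.G W.w r S →
            ∀ m : ℕ, 0 < m → ∀ c cZ : W.V → Fin m,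
              HasWeakDiamLE (powerGraph (delVerts W.G Z) W.w ℓ) Zᶜ
                (powerGraph (delVerts W.G Z) W.w ℓ) c N →
              ∀ c' : W.V → Fin m,
                (∀ v ∈ Z, c' v = cZ v) →
                (∀ v ∈ Zᶜ, c' v = c v) →
                HasWeakDiamLE (powerGraph W.G W.w ℓ) Set.univ
                  (powerGraph W.G W.w ℓ) c' Nstar := by
  set n₀ : ℕ := ⌈r / ℓ⌉₊ with hn₀def
  have hn₀ : ℓ + r ≤ (n₀ + 1) * ℓ := by
    have h1 : r / ℓ ≤ (n₀ : ℝ) := Nat.le_ceil _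
    rw [div_le_iff₀ hℓ] at h1
    nlinarith
  refine ⟨(k + 1 : ℝ) * (N + ((2 * (2 * n₀ + 1) + 4 : ℕ) : ℝ)), ?_, ?_⟩
  · have h0 : (0 : ℝ) ≤ ((2 * (2 * n₀ + 1) + 4 : ℕ) : ℝ) := Nat.cast_nonneg _
    have hk : (0 : ℝ) ≤ (k : ℝ) + 1 := by positivity
    nlinarith
  · intro W hb S hS Z hZ m hm c cZ hcN c' hc'Z hc'c
    haveI := W.fin
    intro x _ y _ hre
    obtain ⟨q⟩ := hre
    have hbound := main_aux hℓ hr W.pos hb hZ hc'c hcN hn₀ k S subset_rfl hS x y q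
      (fun v _ s hs _ => hs)
    have hconv : ENNReal.ofReal ((k + 1 : ℝ) * (N + ((2 * (2 * n₀ + 1) + 4 : ℕ) : ℝ)))
        = ((k + 1 : ℕ) : ℝ≥0∞) *
          (ENNReal.ofReal N + ((2 * (2 * n₀ + 1) + 4 : ℕ) : ℝ≥0∞)) := by
      rw [ENNReal.ofReal_mul (by positivity), ENNReal.ofReal_add hN.le (Nat.cast_nonneg _),
        ENNReal.ofReal_natCast]
      congr 1
      rw [show ((k : ℝ) + 1) = ((k + 1 : ℕ) : ℝ) by push_cast; ring, ENNReal.ofReal_natCast]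
    rw [hconv]
    exact hbound
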